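/- Let (C, J) be a site with C locally small and admitting pullbacks, let U be an object of C, and let (ι_i : U_i ⟶ U)_{i∈I} be a family whose generated sieve is a J-covering sieve of U. For each i ∈ I let S_i be a sheaf of types on the over category C↓U_i for the induced topology J.over U_i. For each i define the presheaf P_i on C↓U by P_i(V, δ) := S_i(U_i ×_U V, pr₁), and for each (i,j) define the presheaf P_{ij} on C↓U by P_{ij}(V, δ) := S_i((U_i ×_U U_j) ×_U V, q_i) where q_i is the canonical projection to U_i; let r_{ij}(V,δ) : P_i(V,δ) → P_{ij}(V,δ) be the map induced by the canonical morphism (U_i ×_U U_j) ×_U V ⟶ U_i ×_U V over U_i. Suppose given, for each (i,j), a natural isomorphism Φ_{i,j} : P_{ij} ≅ P_{ji}. Define the presheaf L on C↓U by L(V, δ) := { (s_i)_{i∈I} ∈ ∏_{i∈I} P_i(V,δ) | for all i, j ∈ I, Φ_{i,j}(r_{ij}(V,δ)(s_i)) = r_{ji}(V,δ)(s_j) }, with the restriction maps induced componentwise by those of the P_i. Then L is a sheaf of types on C↓U for the topology J.over U. -/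

import Mathlib

open CategoryTheory CategoryTheory.Limits Opposite

universe t w v u

namespace Glue15

variable {C : Type u} [Category.{v} C] [HasPullbacks C]
variable {I : Type t} {U : C} (X : I → C) (ι : ∀ i, X i ⟶ U)

/-- The base change functor `C↓U ⥤ C↓U_i`, `(V, δ) ↦ (U_i ×_U V, pr₁)`. -/
noncomputable def bc (i : I) : Over U ⥤ Over (X i) where
  obj V := Over.mk (pullback.fst (ι i) V.hom)
  map {V V'} f := Over.homMk
    (pullback.map (ι i) V.hom (ι i) V'.hom (𝟙 _) f.left (𝟙 _) (by simp) (by simp))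
    (by exact (pullback.lift_fst _ _ _).trans (Category.comp_id _))
  map_id V := by
    apply Over.OverMorphism.ext
    apply pullback.hom_ext <;> simp
  map_comp {V V' V''} f g := by
    ext : 1
    refine Eq.trans ?_ (pullback.map_comp (𝟙 _) (𝟙 _) f.left g.left (𝟙 _) (𝟙 _) (by simp) (by simp) (by simp) (by simp)).symm
    simp

end Glue15

namespace Glue15

variable {C : Type u} [Category.{v} C] [HasPullbacks C]
variable {I : Type t} {U : C} (X : I → C) (ι : ∀ i, X i ⟶ U)

/-- The structure morphism `U_i ×_U U_j ⟶ U` of the overlap. -/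
noncomputable abbrev wmap (i j : I) : pullback (ι i) (ι j) ⟶ U :=
  pullback.fst (ι i) (ι j) ≫ ι i

/-- The base change functor `C↓U ⥤ C↓U_i`, `(V, δ) ↦ ((U_i ×_U U_j) ×_U V, q_i)`, where
`q_i` is the canonical projection to `U_i`. -/
noncomputable def bc2 (i j : I) : Over U ⥤ Over (X i) where
  obj V := Over.mk (pullback.fst (wmap X ι i j) V.hom ≫ pullback.fst (ι i) (ι j))
  map {V V'} f := Over.homMk
    (pullback.map (wmap X ι i j) V.hom (wmap X ι i j) V'.hom (𝟙 _) f.left (𝟙 _)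
      (by simp) (by simp))
    (by exact (pullback.lift_fst_assoc _ _ _ _).trans (by simp))
  map_id V := by
    apply Over.OverMorphism.ext
    apply pullback.hom_ext <;> simp
  map_comp {V V' V''} f g := by
    ext : 1
    refine Eq.trans ?_ (pullback.map_comp (𝟙 _) (𝟙 _) f.left g.left (𝟙 _) (𝟙 _) (by simp) (by simp) (by simp) (by simp)).symm
    simp

/-- The canonical morphism `(U_i ×_U U_j) ×_U V ⟶ U_i ×_U V` over `U_i`, natural in `V`. -/
noncomputable def resMor (i j : I) : bc2 X ι i j ⟶ bc X ι i where
  app V := Over.homMk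
    (pullback.lift (pullback.fst (wmap X ι i j) V.hom ≫ pullback.fst (ι i) (ι j))
      (pullback.snd (wmap X ι i j) V.hom)
      (by exact (Category.assoc _ _ _).trans pullback.condition))
    (by exact pullback.lift_fst _ _ _)
  naturality {V V'} f := by
    ext : 1
    show pullback.map (wmap X ι i j) V.hom (wmap X ι i j) V'.hom (𝟙 _) f.left (𝟙 _)
        (by simp) (by simp) ≫
      pullback.lift (pullback.fst (wmap X ι i j) V'.hom ≫ pullback.fst (ι i) (ι j))
        (pullback.snd (wmap X ι i j) V'.hom)
        ((Category.assoc _ _ _).trans pullback.condition) =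
      pullback.lift (pullback.fst (wmap X ι i j) V.hom ≫ pullback.fst (ι i) (ι j))
        (pullback.snd (wmap X ι i j) V.hom)
        ((Category.assoc _ _ _).trans pullback.condition) ≫
      pullback.map (ι i) V.hom (ι i) V'.hom (𝟙 _) f.left (𝟙 _) (by simp) (by simp)
    apply pullback.hom_ext <;> simp only [pullback.lift_fst, pullback.lift_fst_assoc, pullback.lift_snd, pullback.lift_snd_assoc, Category.assoc, Category.comp_id]

end Glue15

namespace Glue15

variable {C : Type u} [Category.{v} C] [HasPullbacks C]
variable {I : Type t} {U : C} (X : I → C) (ι : ∀ i, X i ⟶ U)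
variable (S : ∀ i, (Over (X i))ᵒᵖ ⥤ Type w)

/-- The presheaf `P_i` on `C↓U` given by `P_i(V, δ) := S_i(U_i ×_U V, pr₁)`. -/
noncomputable def P (i : I) : (Over U)ᵒᵖ ⥤ Type w := (bc X ι i).op ⋙ S i

/-- The presheaf `P_{ij}` on `C↓U` given by `P_{ij}(V, δ) := S_i((U_i ×_U U_j) ×_U V, q_i)`. -/
noncomputable def Pij (i j : I) : (Over U)ᵒᵖ ⥤ Type w := (bc2 X ι i j).op ⋙ S i

/-- The restriction map `r_{ij} : P_i ⟶ P_{ij}` induced by the canonical morphism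
`(U_i ×_U U_j) ×_U V ⟶ U_i ×_U V` over `U_i`. -/
noncomputable def r (i j : I) : P X ι S i ⟶ Pij X ι S i j :=
  Functor.whiskerRight (NatTrans.op (resMor X ι i j)) (S i)

variable (Φ : ∀ i j, Pij X ι S i j ≅ Pij X ι S j i)

/-- The glued presheaf `L` on `C↓U`, whose sections over `(V, δ)` are the matching families
`(s_i) ∈ ∏_i P_i(V, δ)` with `Φ_{i,j}(r_{ij}(s_i)) = r_{ji}(s_j)` for all `i, j`. -/
noncomputable def glued : (Over U)ᵒᵖ ⥤ Type max t w where
  obj V := { s : ∀ i, (P X ι S i).obj V //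
    ∀ i j, (Φ i j).hom.app V ((r X ι S i j).app V (s i)) = (r X ι S j i).app V (s j) }
  map {V V'} f := TypeCat.ofHom fun s => ⟨fun i => (P X ι S i).map f (s.1 i), by
    intro i j
    have h1 := NatTrans.naturality_apply (r X ι S i j) f (s.1 i)
    have h2 := NatTrans.naturality_apply (Φ i j).hom f ((r X ι S i j).app V (s.1 i))
    have h3 := NatTrans.naturality_apply (r X ι S j i) f (s.1 j)
    rw [h1, h2, s.2 i j]
    exact h3.symm⟩
  map_id V := by
    ext s i
    show (P X ι S i).map (𝟙 V) (s.1 i) = s.1 i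
    simp
  map_comp {V V' V''} f g := by
    ext s i
    show (P X ι S i).map (f ≫ g) (s.1 i) = (P X ι S i).map g ((P X ι S i).map f (s.1 i))
    simp


lemma pullback_coverPreserving {X Y : C} (f : X ⟶ Y) (J : GrothendieckTopology C) :
    CoverPreserving (J.over Y) (J.over X) (Over.pullback f) :=
  J.coverPreserving_overPullback f

instance pullback_isContinuous {X Y : C} (f : X ⟶ Y) (J : GrothendieckTopology C) :
    Functor.IsContinuous (Over.pullback f) (J.over Y) (J.over X) :=
  Functor.isContinuous_of_coverPreserving
    (compatiblePreservingOfFlat _ _) (pullback_coverPreserving f J)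

/-- The functor `bc` is isomorphic to `Over.pullback`. -/
noncomputable def bcIso (i : I) : Over.pullback (ι i) ≅ bc X ι i :=
  NatIso.ofComponents
    (fun V => Over.isoMk (pullbackSymmetry V.hom (ι i)) (by simp [bc]))
    (fun {V V'} f => by
      apply Over.OverMorphism.ext
      unfold bc
      apply pullback.hom_ext <;> simp
      · erw [pullback.lift_snd, pullback.lift_fst]; simp
      · erw [pullback.lift_fst, pullback.lift_snd]; simp)

/-- The functor `bc2` is isomorphic to a composition of `Over.pullback` and `Over.map`. -/
noncomputable def bc2Iso (i j : I) :
    Over.pullback (wmap X ι i j) ⋙ Over.map (pullback.fst (ι i) (ι j)) ≅ bc2 X ι i j :=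
  NatIso.ofComponents
    (fun V => Over.isoMk (pullbackSymmetry V.hom (wmap X ι i j)) (by simp [bc2]))
    (fun {V V'} f => by
      apply Over.OverMorphism.ext
      unfold bc2
      apply pullback.hom_ext <;> simp
      · erw [pullback.lift_snd, pullback.lift_fst]; simp
      · erw [pullback.lift_fst, pullback.lift_snd]; simp)

instance bc_isContinuous (J : GrothendieckTopology C) (i : I) :
    Functor.IsContinuous (bc X ι i) (J.over U) (J.over (X i)) :=
  Functor.isContinuous_of_iso (bcIso X ι i) _ _

instance bc2_isContinuous (J : GrothendieckTopology C) (i j : I) :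
    Functor.IsContinuous (bc2 X ι i j) (J.over U) (J.over (X i)) :=
  Functor.isContinuous_comp' (bc2Iso X ι i j) _ (J.over (pullback (ι i) (ι j))) _

variable (S : ∀ i, (Over (X i))ᵒᵖ ⥤ Type w) in
lemma P_isSheaf (J : GrothendieckTopology C)
    (hS : ∀ i, Presieve.IsSheaf (J.over (X i)) (S i)) (i : I) :
    Presieve.IsSheaf (J.over U) (P X ι S i) :=
  (bc X ι i).op_comp_isSheaf_of_types (J.over U) (J.over (X i))
    ⟨S i, (isSheaf_iff_isSheaf_of_type _ _).2 (hS i)⟩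

variable (S : ∀ i, (Over (X i))ᵒᵖ ⥤ Type w) in
lemma Pij_isSheaf (J : GrothendieckTopology C)
    (hS : ∀ i, Presieve.IsSheaf (J.over (X i)) (S i)) (i j : I) :
    Presieve.IsSheaf (J.over U) (Pij X ι S i j) :=
  (bc2 X ι i j).op_comp_isSheaf_of_types (J.over U) (J.over (X i))
    ⟨S i, (isSheaf_iff_isSheaf_of_type _ _).2 (hS i)⟩

/-- Given a `J`-covering family `(ι_i : U_i ⟶ U)`, sheaves `S_i` on the
localized sites `C↓U_i`, and compatible transition isomorphisms `Φ_{i,j}` between the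
overlap presheaves, the glued presheaf `L` of matching families is a sheaf on `C↓U` for the
over-topology `J.over U`. -/
theorem glued_isSheaf (J : GrothendieckTopology C)
    (hcov : Sieve.generate (Presieve.ofArrows X ι) ∈ J U)
    (hS : ∀ i, Presieve.IsSheaf (J.over (X i)) (S i)) :
    Presieve.IsSheaf (J.over U) (glued X ι S Φ) := by
  intro V R hR x hx
  have hP := fun i => P_isSheaf X ι S J hS i R hR
  have hPij := fun i j => (Pij_isSheaf X ι S J hS i j R hR).isSeparatedFor
  -- componentwise families
  set xi : ∀ i, Presieve.FamilyOfElements (P X ι S i) R :=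
    fun i _ f hf => (x f hf).1 i with hxi
  have hxi_compat : ∀ i, (xi i).Compatible := by
    intro i Y₁ Y₂ Z g₁ g₂ f₁ f₂ h₁ h₂ hcomm
    have := hx g₁ g₂ h₁ h₂ hcomm
    exact congrFun (congrArg Subtype.val this) i
  choose ti hti huniq using fun i => hP i (xi i) (hxi_compat i)
  have hcompat : ∀ i j, (Φ i j).hom.app (op V) ((r X ι S i j).app (op V) (ti i)) =
      (r X ι S j i).app (op V) (ti j) := by
    intro i j
    apply (hPij j i).ext
    intro Z f hf
    have n1 := NatTrans.naturality_apply (r X ι S i j) f.op (ti i)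
    have n2 := NatTrans.naturality_apply (Φ i j).hom f.op ((r X ι S i j).app (op V) (ti i))
    have n3 := NatTrans.naturality_apply (r X ι S j i) f.op (ti j)
    rw [← n2, ← n1, hti i f hf, ← n3, hti j f hf]
    exact (x f hf).2 i j
  refine ⟨⟨fun i => ti i, hcompat⟩, ?_, ?_⟩
  · intro Z f hf
    apply Subtype.ext
    funext i
    exact hti i f hf
  · rintro ⟨t', ht'⟩ hamalg
    apply Subtype.ext
    funext i
    refine huniq i (t' i) ?_
    intro Z f hf
    exact congrFun (congrArg Subtype.val (hamalg f hf)) i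


end Glue15
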